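/- Let M : X → Y be a linear map between finite-dimensional real inner product spaces and K ⊆ X a closed convex cone. If Ker(M) ∩ K = {0}, then the image M(K) is closed. -/
import Mathlib


theorem stmt0 {X Y : Type*} [NormedAddCommGroup X] [InnerProductSpace ℝ X]
    [FiniteDimensional ℝ X] [NormedAddCommGroup Y] [InnerProductSpace ℝ Y]
    [FiniteDimensional ℝ Y] (M : X →ₗ[ℝ] Y) (K : Set X)
    (hKclosed : IsClosed K) (hKconv : Convex ℝ K)
    (hKcone : ∀ x ∈ K, ∀ t : ℝ, 0 ≤ t → t • x ∈ K)
    (hker : (LinearMap.ker M : Set X) ∩ K = {0}) :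
    IsClosed (M '' K) := by
  have hM : Continuous M := M.continuous_of_finiteDimensional
  -- key coercivity inequality on K
  obtain ⟨c, hcpos, hc⟩ : ∃ c : ℝ, 0 < c ∧ ∀ x ∈ K, ‖x‖ ≤ c * ‖M x‖ := by
    set S := K ∩ Metric.sphere (0 : X) 1 with hSdef
    by_cases hSne : S.Nonempty
    · have hScpt : IsCompact S := (isCompact_sphere 0 1).inter_left hKclosed
      obtain ⟨u, huS, hu⟩ :=
        hScpt.exists_isMinOn hSne (hM.norm).continuousOn
      have hm : 0 < ‖M u‖ := by
        rcases huS with ⟨huK, huSph⟩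
        rw [norm_pos_iff]
        intro h0
        have : u ∈ (LinearMap.ker M : Set X) ∩ K := ⟨h0, huK⟩
        rw [hker] at this
        simp only [Set.mem_singleton_iff] at this
        rw [this] at huSph
        simp at huSph
      refine ⟨‖M u‖⁻¹, by positivity, ?_⟩
      intro x hxK
      rcases eq_or_ne x 0 with rfl | hx0
      · simp
      · have hnx : (0 : ℝ) < ‖x‖ := norm_pos_iff.mpr hx0
        have huK' : ‖x‖⁻¹ • x ∈ S := by
          constructor
          · exact hKcone x hxK _ (by positivity)
          · simp [norm_smul, abs_of_pos (inv_pos.mpr hnx), inv_mul_cancel₀ hnx.ne']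
        have : ‖M u‖ ≤ ‖M (‖x‖⁻¹ • x)‖ := hu huK'
        rw [map_smul, norm_smul, Real.norm_eq_abs, abs_of_pos (inv_pos.mpr hnx)] at this
        have key : ‖x‖ * ‖M u‖ ≤ ‖M x‖ := by
          have h' := mul_le_mul_of_nonneg_left this hnx.le
          calc ‖x‖ * ‖M u‖ = ‖x‖ * ‖M u‖ := rfl
          _ ≤ ‖x‖ * (‖x‖⁻¹ * ‖M x‖) := h'
          _ = ‖M x‖ := by field_simp
        rw [← div_eq_inv_mul, le_div_iff₀ hm]
        exact key
    · -- S empty: K = {0}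
      refine ⟨1, one_pos, ?_⟩
      intro x hxK
      rcases eq_or_ne x 0 with rfl | hx0
      · simp
      · exfalso
        apply hSne
        have hnx : (0 : ℝ) < ‖x‖ := norm_pos_iff.mpr hx0
        exact ⟨‖x‖⁻¹ • x, hKcone x hxK _ (by positivity),
          by simp [norm_smul, abs_of_pos (inv_pos.mpr hnx), inv_mul_cancel₀ hnx.ne']⟩
  -- now prove closedness via sequences
  apply IsSeqClosed.isClosed
  intro y p hy hyp
  choose x hxK hMx using hy
  have hcauchy : CauchySeq y := hyp.cauchySeq
  obtain ⟨C, hC⟩ := (isBounded_iff_forall_norm_le).mp (Metric.isBounded_range_of_tendsto y hyp)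
  have hxball : ∀ n, x n ∈ K ∩ Metric.closedBall (0 : X) (c * C) := by
    intro n
    refine ⟨hxK n, ?_⟩
    rw [Metric.mem_closedBall, dist_zero_right]
    calc ‖x n‖ ≤ c * ‖M (x n)‖ := hc _ (hxK n)
    _ ≤ c * C := by
        have := hC (y n) ⟨n, rfl⟩
        rw [hMx n]
        nlinarith
  have hbdd : Bornology.IsBounded (K ∩ Metric.closedBall (0 : X) (c * C)) :=
    Metric.isBounded_closedBall.subset (Set.inter_subset_right)
  obtain ⟨a, ha, φ, hφ, hconv⟩ := tendsto_subseq_of_bounded hbdd hxball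
  have hclosed : IsClosed (K ∩ Metric.closedBall (0 : X) (c * C)) :=
    hKclosed.inter Metric.isClosed_closedBall
  rw [hclosed.closure_eq] at ha
  refine ⟨a, ha.1, ?_⟩
  have h1 : Filter.Tendsto (fun n => M (x (φ n))) Filter.atTop (nhds (M a)) :=
    (hM.tendsto a).comp hconv
  have h2 : Filter.Tendsto (fun n => M (x (φ n))) Filter.atTop (nhds p) := by
    have : (fun n => M (x (φ n))) = y ∘ φ := by
      funext n; exact hMx (φ n)
    rw [this]
    exact hyp.comp hφ.tendsto_atTop
  exact tendsto_nhds_unique h1 h2
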